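/- Let G be a Δ-regular 1-factorizable finite simple graph on n = 4k vertices with 1-factorization M_1,…,M_Δ, and label the vertices of L(G) so that the j-th matching class receives variables x_{(j−1)·n/2+1},…,x_{j·n/2}. Then for each pair 1 ≤ a < b ≤ Δ, the graph polynomial of the 2-regular bipartite graph induced in L(G) by M_a ∪ M_b has a monomial with nonzero coefficient in which every one of its n variables appears with exponent exactly 1. -/

import Mathlib

open MvPolynomial

/-- An arbitrary linear labeling of a finite vertex type. -/
noncomputable def someLinearOrder (V : Type*) [Fintype V] : LinearOrder V :=
  LinearOrder.lift' (Fintype.equivFin V) (Fintype.equivFin V).injective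

/-- The graph polynomial `∏_{ij ∈ E, i<j} (x_i − x_j)` with respect to a given
linear labeling of the vertices. -/
noncomputable def graphPolyAux {V : Type*} [Fintype V] (lo : LinearOrder V)
    (G : SimpleGraph V) : MvPolynomial V ℤ :=
  letI := lo
  letI := Classical.decRel G.Adj
  ∏ p ∈ Finset.univ.filter (fun p : V × V => G.Adj p.1 p.2 ∧ p.1 < p.2), (X p.1 - X p.2)

/-- The graph polynomial of `G` (its monomial support does not depend on the labeling). -/
noncomputable def graphPoly {V : Type*} [Fintype V] (G : SimpleGraph V) : MvPolynomial V ℤ :=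
  graphPolyAux (someLinearOrder V) G

/-- The Alon–Tarsi number of `G`: one plus the minimum, over monomials with nonzero
coefficient in the graph polynomial, of the maximum exponent of a variable. -/
noncomputable def alonTarsiNumber {V : Type*} [Fintype V] (G : SimpleGraph V) : ℕ :=
  1 + sInf {d : ℕ | ∃ m ∈ (graphPoly G).support, d = Finset.univ.sup fun v => m v}

/-- `G` is colorable from any assignment of lists of size `t`. -/
def Choosable {V : Type*} (G : SimpleGraph V) (t : ℕ) : Prop :=
  ∀ L : V → Finset ℕ, (∀ v, (L v).card = t) →
    ∃ c : V → ℕ, (∀ v, c v ∈ L v) ∧ ∀ ⦃v w⦄, G.Adj v w → c v ≠ c w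

/-- The choice number (list chromatic number) of `G`. -/
noncomputable def choiceNumber {V : Type*} (G : SimpleGraph V) : ℕ :=
  sInf {t : ℕ | Choosable G t}

/-- `M` is a 1-factorization of `G` into `Δ` perfect matchings. -/
def IsOneFactorization {V : Type*} (G : SimpleGraph V) {Δ : ℕ}
    (M : Fin Δ → G.Subgraph) : Prop :=
  (∀ i, (M i).IsPerfectMatching) ∧
  (∀ i j, i ≠ j → Disjoint (M i).edgeSet (M j).edgeSet) ∧
  (⋃ i, (M i).edgeSet) = G.edgeSet

/-- `G` is 1-factorizable into `Δ` perfect matchings. -/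
def OneFactorizable {V : Type*} (G : SimpleGraph V) (Δ : ℕ) : Prop :=
  ∃ M : Fin Δ → G.Subgraph, IsOneFactorization G M

/-- The total graph of `G`, on vertex set `V(G) ⊕ E(G)`. -/
def totalGraph {V : Type*} (G : SimpleGraph V) : SimpleGraph (V ⊕ G.edgeSet) where
  Adj x y := match x, y with
    | .inl v, .inl w => G.Adj v w
    | .inl v, .inr e => v ∈ (e : Sym2 V)
    | .inr e, .inl v => v ∈ (e : Sym2 V)
    | .inr e, .inr f => e ≠ f ∧ ∃ v, v ∈ (e : Sym2 V) ∧ v ∈ (f : Sym2 V)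
  symm := ⟨by
    rintro (v | e) (w | f) h
    · exact G.symm.symm _ _ h
    · exact h
    · exact h
    · exact ⟨h.1.symm, h.2.imp fun v hv => ⟨hv.2, hv.1⟩⟩⟩
  loopless := ⟨by
    rintro (v | e) h
    · exact G.loopless.irrefl v h
    · exact h.1 rfl⟩

/-- The subdivision graph of `G`, on vertex set `V(G) ⊕ E(G)`. -/
def subdivisionGraph {V : Type*} (G : SimpleGraph V) : SimpleGraph (V ⊕ G.edgeSet) where
  Adj x y := match x, y with
    | .inl v, .inr e => v ∈ (e : Sym2 V)
    | .inr e, .inl v => v ∈ (e : Sym2 V)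
    | _, _ => False
  symm := ⟨by rintro (v | e) (w | f) h <;> simp_all⟩
  loopless := ⟨by rintro (v | e) h <;> simp_all⟩

/-- The square of a graph: adjacency at distance 1 or 2. -/
def squareGraph {W : Type*} (H : SimpleGraph W) : SimpleGraph W where
  Adj u v := u ≠ v ∧ (H.Adj u v ∨ ∃ w, H.Adj u w ∧ H.Adj w v)
  symm := ⟨fun u v ⟨hne, h⟩ =>
    ⟨hne.symm, h.imp (fun a => H.symm.symm _ _ a) fun ⟨w, h1, h2⟩ => ⟨w, h2.symm, h1.symm⟩⟩⟩
  loopless := ⟨fun u h => h.1 rfl⟩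

section EFLAux
open Finset


noncomputable def allOnes (W : Type*) [Fintype W] [DecidableEq W] : W →₀ ℕ :=
  ∑ w : W, Finsupp.single w 1

lemma allOnes_apply {W : Type*} [Fintype W] [DecidableEq W] (w : W) : allOnes W w = 1 := by
  simp [allOnes, Finsupp.single_apply, Finset.sum_apply', Finset.sum_ite_eq']

lemma prod_X_eq_monomial {W I : Type*} [DecidableEq W] (t : Finset I) (h : I → W) :
    ∏ i ∈ t, (X (h i) : MvPolynomial W ℤ)
      = monomial (∑ i ∈ t, Finsupp.single (h i) 1) 1 := by
  classical
  induction t using Finset.induction_on with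
  | empty => simp
  | insert x t hx ih =>
      rw [prod_insert hx, sum_insert hx, ih, X, monomial_mul, one_mul]

lemma coeff_allOnes_ne_zero {W I : Type*} [Fintype W] [DecidableEq W] [Fintype I]
    [DecidableEq I] (pa pb : I → W) (N : ℕ)
    (hcard : ∀ t : Finset I,
      (∑ i ∈ t, Finsupp.single (pa i) 1) + (∑ i ∈ univ \ t, Finsupp.single (pb i) 1)
        = allOnes W → t.card = N)
    (t₀ : Finset I)
    (ht₀ : (∑ i ∈ t₀, Finsupp.single (pa i) 1) + (∑ i ∈ univ \ t₀, Finsupp.single (pb i) 1)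
        = allOnes W) :
    coeff (allOnes W) (∏ i : I, (X (pa i) - X (pb i) : MvPolynomial W ℤ)) ≠ 0 := by
  classical
  have key : ∀ t : Finset I, (∏ i ∈ t, (X (pa i) : MvPolynomial W ℤ)) *
      ∏ i ∈ univ \ t, (-X (pb i) : MvPolynomial W ℤ)
      = monomial ((∑ i ∈ t, Finsupp.single (pa i) 1) + ∑ i ∈ univ \ t, Finsupp.single (pb i) 1)
          ((-1 : ℤ) ^ (univ \ t).card) := by
    intro t
    have h1 : ∏ i ∈ univ \ t, (-X (pb i) : MvPolynomial W ℤ)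
        = (-1 : MvPolynomial W ℤ) ^ (univ \ t).card * ∏ i ∈ univ \ t, (X (pb i)) := by
      rw [← prod_const, ← prod_mul_distrib]; simp
    rw [h1, prod_X_eq_monomial, prod_X_eq_monomial]
    rw [show ((-1 : MvPolynomial W ℤ) ^ (univ \ t).card) = C ((-1 : ℤ) ^ (univ \ t).card) by
      simp]
    rw [mul_left_comm, monomial_mul, C_mul_monomial]
    ring_nf
  have expand : (∏ i : I, (X (pa i) - X (pb i) : MvPolynomial W ℤ))
      = ∑ t ∈ (univ : Finset I).powerset,
          monomial ((∑ i ∈ t, Finsupp.single (pa i) 1) + ∑ i ∈ univ \ t, Finsupp.single (pb i) 1)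
            ((-1 : ℤ) ^ (univ \ t).card) := by
    have := Finset.prod_add (fun i => (X (pa i) : MvPolynomial W ℤ)) (fun i => -X (pb i)) univ
    simp only [sub_eq_add_neg]
    rw [this]
    exact Finset.sum_congr rfl fun t _ => key t
  rw [expand, coeff_sum]
  simp only [coeff_monomial]
  have hconst : ∀ t ∈ (univ : Finset I).powerset,
      (if (∑ i ∈ t, Finsupp.single (pa i) 1) + (∑ i ∈ univ \ t, Finsupp.single (pb i) 1)
          = allOnes W then ((-1 : ℤ) ^ (univ \ t).card) else 0)
      = (if (∑ i ∈ t, Finsupp.single (pa i) 1) + (∑ i ∈ univ \ t, Finsupp.single (pb i) 1)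
          = allOnes W then ((-1 : ℤ) ^ (Fintype.card I - N)) else 0) := by
    intro t _
    by_cases h : (∑ i ∈ t, Finsupp.single (pa i) 1) + (∑ i ∈ univ \ t, Finsupp.single (pb i) 1)
          = allOnes W
    · rw [if_pos h, if_pos h, card_sdiff_of_subset (subset_univ t), card_univ, hcard t h]
    · rw [if_neg h, if_neg h]
  rw [Finset.sum_congr rfl hconst, ← Finset.sum_filter, Finset.sum_const]
  have hmem : t₀ ∈ (univ : Finset I).powerset.filter (fun t =>
      (∑ i ∈ t, Finsupp.single (pa i) 1) + (∑ i ∈ univ \ t, Finsupp.single (pb i) 1)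
        = allOnes W) := by
    simp [ht₀]
  refine smul_ne_zero ?_ (pow_ne_zero _ (by norm_num : (-1:ℤ) ≠ 0))
  exact Finset.card_ne_zero_of_mem hmem

lemma graphPolyAux_eq_C_mul {W : Type*} [Fintype W] (lo : LinearOrder W) (H : SimpleGraph W)
    {I : Type*} [Fintype I] (pa pb : I → W)
    (hadj : ∀ i, H.Adj (pa i) (pb i))
    (hsurj : ∀ u w, H.Adj u w → ∃ i, (u = pa i ∧ w = pb i) ∨ (u = pb i ∧ w = pa i))
    (hinj : ∀ i j, pa i = pa j → pb i = pb j → i = j)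
    (hsep : ∀ i j, pa i ≠ pb j) :
    ∃ ε : ℤ, ε ≠ 0 ∧ graphPolyAux lo H = C ε * ∏ i, (X (pa i) - X (pb i)) := by
  classical
  letI := lo
  set F : I → W × W := fun i => if pa i < pb i then (pa i, pb i) else (pb i, pa i) with hF
  have hFinj : Function.Injective F := by
    intro i j hij
    by_cases h1 : pa i < pb i <;> by_cases h2 : pa j < pb j <;>
      simp only [hF, if_pos, if_neg, h1, h2, ite_true, ite_false, Prod.mk.injEq] at hij
    · exact hinj _ _ hij.1 hij.2
    · exact absurd hij.1 (hsep i j)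
    · exact absurd hij.2 (hsep i j)
    · exact hinj _ _ hij.2 hij.1
  have hset : (Finset.univ.filter (fun p : W × W => H.Adj p.1 p.2 ∧ p.1 < p.2))
      = Finset.univ.image F := by
    ext p
    simp only [mem_filter, mem_univ, true_and, mem_image]
    constructor
    · rintro ⟨hadjp, hltp⟩
      obtain ⟨i, hi | hi⟩ := hsurj _ _ hadjp
      · refine ⟨i, ?_⟩
        have : pa i < pb i := by rw [← hi.1, ← hi.2]; exact hltp
        simp only [hF, if_pos this]
        exact Prod.ext hi.1.symm hi.2.symm
      · refine ⟨i, ?_⟩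
        have hlt : pb i < pa i := by rw [← hi.1, ← hi.2]; exact hltp
        simp only [hF, if_neg (asymm hlt)]
        exact Prod.ext hi.1.symm hi.2.symm
    · rintro ⟨i, rfl⟩
      by_cases h1 : pa i < pb i
      · simp only [hF, if_pos h1]; exact ⟨hadj i, h1⟩
      · simp only [hF, if_neg h1]
        refine ⟨(hadj i).symm, ?_⟩
        exact lt_of_le_of_ne (not_lt.mp h1) (Ne.symm (hadj i).ne)
  have hprod : graphPolyAux lo H
      = ∏ i : I, (X (F i).1 - X (F i).2 : MvPolynomial W ℤ) := by
    rw [graphPolyAux]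
    rw [show (Finset.univ.filter (fun p : W × W => H.Adj p.1 p.2 ∧ p.1 < p.2))
        = Finset.univ.image F from hset]
    exact Finset.prod_image (fun i _ j _ h => hFinj h)
  refine ⟨∏ i : I, (if pa i < pb i then (1 : ℤ) else -1), ?_, ?_⟩
  · rw [Finset.prod_ne_zero_iff]
    intro i _
    split <;> norm_num
  · rw [hprod, map_prod, ← Finset.prod_mul_distrib]
    refine Finset.prod_congr rfl fun i _ => ?_
    by_cases h1 : pa i < pb i
    · simp only [hF, if_pos h1, map_one, one_mul]
    · simp only [hF, if_neg h1, map_neg, map_one]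
      ring

lemma exists_alternating_coloring {V : Type*} [Fintype V]
    (α β : Equiv.Perm V) (hα2 : α * α = 1) (hβ2 : β * β = 1)
    (hαf : ∀ v, α v ≠ v) (hβf : ∀ v, β v ≠ v) :
    ∃ c : V → Bool, (∀ v, c (α v) = !c v) ∧ (∀ v, c (β v) = !c v) := by
  classical
  set σ : Equiv.Perm V := β * α with hσ
  have hαinv : α⁻¹ = α := by rw [eq_comm, eq_inv_iff_mul_eq_one, hα2]
  have hβinv : β⁻¹ = β := by rw [eq_comm, eq_inv_iff_mul_eq_one, hβ2]
  have hαα : ∀ v, α (α v) = v := fun v => by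
    have := congrArg (fun g : Equiv.Perm V => g v) hα2
    simpa [Equiv.Perm.mul_apply] using this
  have hz : ∀ (a b : ℤ) (v : V), (σ ^ a) ((σ ^ b) v) = (σ ^ (a + b)) v := by
    intro a b v
    rw [← Equiv.Perm.mul_apply, ← zpow_add]
  have hconj : ∀ k : ℤ, α * σ ^ k * α⁻¹ = σ ^ (-k) := by
    intro k
    have h1 : α * σ * α⁻¹ = σ⁻¹ := by
      rw [hαinv, hσ, mul_inv_rev, hαinv, hβinv]
      simp only [mul_assoc]
      rw [hα2, mul_one]
    have h2 := conj_zpow (i := k) (a := α) (b := σ)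
    rw [h1, inv_zpow, ← zpow_neg] at h2
    exact h2.symm
  have happly : ∀ (k : ℤ) (v : V), α ((σ ^ k) v) = (σ ^ (-k)) (α v) := by
    intro k v
    have := congrArg (fun g : Equiv.Perm V => g (α v)) (hconj k)
    simp only [Equiv.Perm.mul_apply, hαinv] at this
    rwa [hαα] at this
  have hclaim : ∀ (k : ℤ) (v : V), (σ ^ k) v ≠ α v := by
    intro k v h
    rcases Int.even_or_odd k with ⟨m, hm⟩ | ⟨m, hm⟩
    · have h1 : α ((σ ^ m) v) = (σ ^ m) v := by
        rw [happly m v, ← h, hm, hz, show (-m + (m + m) : ℤ) = m by ring]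
      exact hαf _ h1
    · have h1 : β ((σ ^ (m+1)) v) = (σ ^ (m+1)) v := by
        have hb : β ((σ ^ (m+1)) v) = σ (α ((σ ^ (m+1)) v)) := by
          show _ = (σ * α) _
          rw [hσ, mul_assoc, hα2, mul_one]
        have e1 : ∀ (x : ℤ) (w : V), σ ((σ ^ x) w) = (σ ^ (1 + x)) w := by
          intro x w; rw [← hz 1 x w, zpow_one]
        rw [hb, happly (m+1) v, ← h, hm, e1, hz,
          show (1 + -(m+1) + (2*m+1) : ℤ) = m + 1 by ring]
      exact hβf _ h1
  let s : Setoid V := ⟨fun u v => ∃ k : ℤ, (σ ^ k) u = v, by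
    constructor
    · intro v; exact ⟨0, by simp⟩
    · rintro u v ⟨k, rfl⟩
      exact ⟨-k, by rw [hz]; simp⟩
    · rintro u v w ⟨k, rfl⟩ ⟨l, rfl⟩
      exact ⟨l + k, by rw [hz]⟩⟩
  let Q := Quotient s
  have hwd : ∀ u v : V, s.r u v → s.r (α u) (α v) := by
    rintro u v ⟨k, rfl⟩
    exact ⟨-k, (happly k u).symm⟩
  let ι : Q → Q := Quotient.map α hwd
  have hmkα : ∀ v : V, Quotient.mk s (α v) = ι (Quotient.mk s v) := fun v => rfl
  have hι2 : ∀ q : Q, ι (ι q) = q := by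
    intro q; induction q using Quotient.ind with
    | _ v => rw [← hmkα, ← hmkα, hαα]
  have hιf : ∀ q : Q, ι q ≠ q := by
    intro q; induction q using Quotient.ind with
    | _ v =>
      intro h
      rw [← hmkα] at h
      obtain ⟨k, hk⟩ : s.r (α v) v := Quotient.exact h
      refine hclaim (-k) v ?_
      have h2 : (σ ^ ((-k) + k)) (α v) = (σ ^ (-k)) v := by rw [← hz, hk]
      simpa using h2.symm
  letI : DecidableEq Q := Classical.decEq Q
  letI : Fintype Q := Fintype.ofSurjective (Quotient.mk s) Quotient.mk_surjective
  let eF := Fintype.equivFin Q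
  let f : Q → Bool := fun q => decide (eF q < eF (ι q))
  have hf : ∀ q, f (ι q) = ! f q := by
    intro q
    have hne : eF (ι q) ≠ eF q := fun h => hιf q (eF.injective h)
    show decide (eF (ι q) < eF (ι (ι q))) = ! decide (eF q < eF (ι q))
    rw [hι2 q]
    rcases lt_or_gt_of_ne hne with h | h
    · simp [h, not_lt_of_gt h]
    · simp [h, not_lt_of_gt h]
  refine ⟨fun v => f (Quotient.mk s v), fun v => ?_, fun v => ?_⟩
  · show f (Quotient.mk s (α v)) = ! f (Quotient.mk s v)
    rw [hmkα]; exact hf _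
  · show f (Quotient.mk s (β v)) = ! f (Quotient.mk s v)
    have hb : Quotient.mk s (β v) = ι (Quotient.mk s v) := by
      rw [← hmkα]
      refine Quotient.sound ⟨-1, ?_⟩
      have h3 : σ (α v) = β v := by
        show (β * α) (α v) = β v
        rw [Equiv.Perm.mul_apply, hαα]
      rw [← h3, show σ (α v) = (σ ^ (1:ℤ)) (α v) by rw [zpow_one], hz]
      simp
    rw [hb]; exact hf _

end EFLAux

open scoped Classical in
/-- Let `G` be a `Δ`-regular 1-factorizable graph on `n = 4k` vertices
with 1-factorization `M`. For any two distinct matchings `M a`, `M b`, the graph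
polynomial of the (2-regular bipartite) subgraph of the line graph induced by
`M a ∪ M b` has a monomial with nonzero coefficient in which every variable appears
with exponent exactly `1`. -/
theorem EFL_pair_of_matchings_permanent_monomial {V : Type*} [Fintype V] [DecidableEq V]
    (G : SimpleGraph V) [DecidableRel G.Adj] (k Δ : ℕ) (hk : 0 < k)
    (hn : Fintype.card V = 4 * k) (hreg : G.IsRegularOfDegree Δ)
    (M : Fin Δ → G.Subgraph) (hM : IsOneFactorization G M)
    (a b : Fin Δ) (hab : a ≠ b) :
    ∃ m ∈ (graphPoly ((G.lineGraph).induce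
        {e : G.edgeSet | e.1 ∈ (M a).edgeSet ∪ (M b).edgeSet})).support,
      ∀ v, m v = 1 := by
  classical
  obtain ⟨hpm, hdisj, -⟩ := hM
  set S : Set G.edgeSet := {e : G.edgeSet | e.1 ∈ (M a).edgeSet ∪ (M b).edgeSet} with hSdef
  have hEx : ∀ i : Fin Δ, ∀ v : V, ∃! w, (M i).Adj v w := fun i =>
    SimpleGraph.Subgraph.isPerfectMatching_iff.mp (hpm i)
  set fA : V → V := fun v => (hEx a v).choose with hfAdef
  set fB : V → V := fun v => (hEx b v).choose with hfBdef
  have hA : ∀ v, (M a).Adj v (fA v) := fun v => (hEx a v).choose_spec.1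
  have hB : ∀ v, (M b).Adj v (fB v) := fun v => (hEx b v).choose_spec.1
  have hAu : ∀ v w, (M a).Adj v w → w = fA v := fun v w h => (hEx a v).choose_spec.2 w h
  have hBu : ∀ v w, (M b).Adj v w → w = fB v := fun v w h => (hEx b v).choose_spec.2 w h
  have hAi : Function.Involutive fA := fun v => (hAu (fA v) v (hA v).symm).symm
  have hBi : Function.Involutive fB := fun v => (hBu (fB v) v (hB v).symm).symm
  have hAne : ∀ v, fA v ≠ v := fun v => Ne.symm (hA v).ne
  have hBne : ∀ v, fB v ≠ v := fun v => Ne.symm (hB v).ne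
  have hD : ∀ e : Sym2 V, e ∈ (M a).edgeSet → e ∈ (M b).edgeSet → False := fun e h1 h2 =>
    Set.disjoint_left.mp (hdisj a b hab) h1 h2
  have hAmem : ∀ e : Sym2 V, e ∈ (M a).edgeSet → ∀ v, v ∈ e → e = s(v, fA v) := by
    intro e
    induction e using Sym2.ind with
    | _ x y =>
      intro he v hv
      rw [SimpleGraph.Subgraph.mem_edgeSet] at he
      rcases Sym2.mem_iff.mp hv with rfl | rfl
      · rw [← hAu _ _ he]
      · rw [Sym2.eq_swap, ← hAu _ _ he.symm]
  have hBmem : ∀ e : Sym2 V, e ∈ (M b).edgeSet → ∀ v, v ∈ e → e = s(v, fB v) := by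
    intro e
    induction e using Sym2.ind with
    | _ x y =>
      intro he v hv
      rw [SimpleGraph.Subgraph.mem_edgeSet] at he
      rcases Sym2.mem_iff.mp hv with rfl | rfl
      · rw [← hBu _ _ he]
      · rw [Sym2.eq_swap, ← hBu _ _ he.symm]
  have hmemS : ∀ v : V, (⟨s(v, fA v), G.mem_edgeSet.mpr (hA v).adj_sub⟩ : G.edgeSet) ∈ S := by
    intro v
    rw [hSdef]
    exact Set.mem_setOf_eq ▸ Or.inl (SimpleGraph.Subgraph.mem_edgeSet.mpr (hA v))
  have hmemS' : ∀ v : V, (⟨s(v, fB v), G.mem_edgeSet.mpr (hB v).adj_sub⟩ : G.edgeSet) ∈ S := by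
    intro v
    rw [hSdef]
    exact Set.mem_setOf_eq ▸ Or.inr (SimpleGraph.Subgraph.mem_edgeSet.mpr (hB v))
  set eA : V → ↥S := fun v => ⟨⟨s(v, fA v), G.mem_edgeSet.mpr (hA v).adj_sub⟩, hmemS v⟩
    with heAdef
  set eB : V → ↥S := fun v => ⟨⟨s(v, fB v), G.mem_edgeSet.mpr (hB v).adj_sub⟩, hmemS' v⟩
    with heBdef
  have heAv : ∀ v, (eA v).1.1 = s(v, fA v) := fun _ => rfl
  have heBv : ∀ v, (eB v).1.1 = s(v, fB v) := fun _ => rfl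
  have heAMa : ∀ v, (eA v).1.1 ∈ (M a).edgeSet := fun v => SimpleGraph.Subgraph.mem_edgeSet.mpr (hA v)
  have heBMb : ∀ v, (eB v).1.1 ∈ (M b).edgeSet := fun v => SimpleGraph.Subgraph.mem_edgeSet.mpr (hB v)
  have hABne : ∀ u v, (eA u).1.1 ≠ (eB v).1.1 := by
    intro u v h
    exact hD _ (heAMa u) (h ▸ heBMb v)
  have heAeq : ∀ (v : V) (s' : ↥S), s'.1.1 ∈ (M a).edgeSet → (eA v = s' ↔ v ∈ s'.1.1) := by
    intro v s' hs'
    constructor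
    · rintro rfl
      exact Sym2.mem_mk_left _ _
    · intro hv
      exact Subtype.ext (Subtype.ext ((hAmem _ hs' v hv).symm))
  have heBeq : ∀ (v : V) (s' : ↥S), s'.1.1 ∈ (M b).edgeSet → (eB v = s' ↔ v ∈ s'.1.1) := by
    intro v s' hs'
    constructor
    · rintro rfl
      exact Sym2.mem_mk_left _ _
    · intro hv
      exact Subtype.ext (Subtype.ext ((hBmem _ hs' v hv).symm))
  have hSmem : ∀ s' : ↥S, s'.1.1 ∈ (M a).edgeSet ∨ s'.1.1 ∈ (M b).edgeSet := fun s' => s'.2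
  -- adjacency in the induced line graph
  have hadj_iff : ∀ u w : ↥S, ((G.lineGraph).induce S).Adj u w ↔
      (u.1 ≠ w.1 ∧ ∃ x, x ∈ u.1.1 ∧ x ∈ w.1.1) := by
    intro u w
    rw [SimpleGraph.comap_adj]
    exact SimpleGraph.lineGraph_adj_iff_exists
  have hadj : ∀ v, ((G.lineGraph).induce S).Adj (eA v) (eB v) := by
    intro v
    rw [hadj_iff]
    exact ⟨fun h => hABne v v (congrArg Subtype.val h),
      ⟨v, Sym2.mem_mk_left _ _, Sym2.mem_mk_left _ _⟩⟩
  have hsurj : ∀ u w : ↥S, ((G.lineGraph).induce S).Adj u w →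
      ∃ i, (u = eA i ∧ w = eB i) ∨ (u = eB i ∧ w = eA i) := by
    intro u w h
    rw [hadj_iff] at h
    obtain ⟨hne, x, hxu, hxw⟩ := h
    rcases hSmem u with hu | hu <;> rcases hSmem w with hw | hw
    · exact absurd (Subtype.ext ((hAmem _ hu x hxu).trans (hAmem _ hw x hxw).symm)) hne
    · exact ⟨x, Or.inl ⟨((heAeq x u hu).mpr hxu).symm, ((heBeq x w hw).mpr hxw).symm⟩⟩
    · exact ⟨x, Or.inr ⟨((heBeq x u hu).mpr hxu).symm, ((heAeq x w hw).mpr hxw).symm⟩⟩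
    · exact absurd (Subtype.ext ((hBmem _ hu x hxu).trans (hBmem _ hw x hxw).symm)) hne
  have hinj : ∀ i j, eA i = eA j → eB i = eB j → i = j := by
    intro i j h1 h2
    have h1' : s(i, fA i) = s(j, fA j) := congrArg (fun z : ↥S => z.1.1) h1
    have h2' : s(i, fB i) = s(j, fB j) := congrArg (fun z : ↥S => z.1.1) h2
    rcases Sym2.eq_iff.mp h1' with ⟨rfl, -⟩ | ⟨hij, -⟩
    · rfl
    rcases Sym2.eq_iff.mp h2' with ⟨rfl, -⟩ | ⟨hij2, -⟩
    · rfl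
    exfalso
    have hAB : fA j = fB j := hij.symm.trans hij2
    refine hD s(j, fA j) (SimpleGraph.Subgraph.mem_edgeSet.mpr (hA j)) ?_
    rw [hAB]
    exact SimpleGraph.Subgraph.mem_edgeSet.mpr (hB j)
  have hsep : ∀ i j, eA i ≠ eB j := fun i j h =>
    hABne i j (congrArg (fun z : ↥S => z.1.1) h)
  -- the coloring
  have h2A : hAi.toPerm fA * hAi.toPerm fA = 1 := by
    ext v
    simp [Equiv.Perm.mul_apply, hAi v]
  have h2B : hBi.toPerm fB * hBi.toPerm fB = 1 := by
    ext v
    simp [Equiv.Perm.mul_apply, hBi v]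
  obtain ⟨c, hc1, hc2⟩ := exists_alternating_coloring (hAi.toPerm fA) (hBi.toPerm fB) h2A h2B
    (fun v => by simpa using hAne v) (fun v => by simpa using hBne v)
  simp only [Function.Involutive.coe_toPerm] at hc1 hc2
  set t₀ : Finset V := Finset.univ.filter (fun v => c v = true) with ht₀def
  -- value computation
  have hval : ∀ (t : Finset V) (s' : ↥S),
      (((∑ i ∈ t, Finsupp.single (eA i) 1)
        + ∑ i ∈ Finset.univ \ t, Finsupp.single (eB i) 1 : ↥S →₀ ℕ)) s'
      = (t.filter (fun i => eA i = s')).card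
        + ((Finset.univ \ t).filter (fun i => eB i = s')).card := by
    intro t s'
    rw [Finsupp.add_apply, Finset.sum_apply', Finset.sum_apply',
      Finset.card_filter, Finset.card_filter]
    congr 1 <;> exact Finset.sum_congr rfl fun i _ => by rw [Finsupp.single_apply]
  have hzeroB : ∀ (t : Finset V) (s' : ↥S), s'.1.1 ∈ (M a).edgeSet →
      (t.filter (fun i => eB i = s')).card = 0 := by
    intro t s' hs'
    rw [Finset.card_eq_zero, Finset.filter_eq_empty_iff]
    intro i _ h
    exact hD s'.1.1 hs' (h ▸ heBMb i)
  have hzeroA : ∀ (t : Finset V) (s' : ↥S), s'.1.1 ∈ (M b).edgeSet →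
      (t.filter (fun i => eA i = s')).card = 0 := by
    intro t s' hs'
    rw [Finset.card_eq_zero, Finset.filter_eq_empty_iff]
    intro i _ h
    exact hD s'.1.1 (h ▸ heAMa i) hs'
  set MaP : Finset ↥S := Finset.univ.filter (fun s' : ↥S => s'.1.1 ∈ (M a).edgeSet) with hMaPdef
  have hcard : ∀ t : Finset V,
      (∑ i ∈ t, Finsupp.single (eA i) 1)
        + (∑ i ∈ Finset.univ \ t, Finsupp.single (eB i) 1) = allOnes ↥S →
      t.card = MaP.card := by
    intro t ht
    have h1 : ∀ s' ∈ MaP, (t.filter (fun i => eA i = s')).card = 1 := by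
      intro s' hs'
      have hmem : s'.1.1 ∈ (M a).edgeSet := (Finset.mem_filter.mp hs').2
      have h2 := DFunLike.congr_fun ht s'
      rw [hval t s', allOnes_apply, hzeroB _ s' hmem, add_zero] at h2
      exact h2
    calc t.card = ∑ s' ∈ MaP, (t.filter fun i => eA i = s').card :=
          Finset.card_eq_sum_card_fiberwise (fun i _ =>
            Finset.mem_filter.mpr ⟨Finset.mem_univ _, heAMa i⟩)
      _ = ∑ _s' ∈ MaP, 1 := Finset.sum_congr rfl h1
      _ = MaP.card := by simp
  -- the canonical alternating set is valid
  have ht₀ : (∑ i ∈ t₀, Finsupp.single (eA i) 1)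
      + (∑ i ∈ Finset.univ \ t₀, Finsupp.single (eB i) 1) = allOnes ↥S := by
    ext s'
    rw [hval, allOnes_apply]
    rcases hSmem s' with hs | hs
    · rw [hzeroB _ s' hs, add_zero]
      have hx : (s'.1.1).out.1 ∈ s'.1.1 := Sym2.out_fst_mem _
      set x := (s'.1.1).out.1 with hxdef
      have hchar : ∀ i, eA i = s' ↔ (i = x ∨ i = fA x) := by
        intro i
        rw [heAeq i s' hs, hAmem _ hs x hx]
        exact Sym2.mem_iff
      by_cases hcx : c x = true
      · have hset : t₀.filter (fun i => eA i = s') = {x} := by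
          ext i
          simp only [ht₀def, Finset.mem_filter, Finset.mem_univ, true_and, hchar i,
            Finset.mem_singleton]
          constructor
          · rintro ⟨hci, rfl | rfl⟩
            · rfl
            · rw [hc1 x, hcx] at hci
              exact absurd hci (by simp)
          · rintro rfl
            exact ⟨hcx, Or.inl rfl⟩
        rw [hset, Finset.card_singleton]
      · have hcx' : c x = false := by
          cases h : c x
          · rfl
          · exact absurd h hcx
        have hcfx : c (fA x) = true := by rw [hc1 x, hcx']; rfl
        have hset : t₀.filter (fun i => eA i = s') = {fA x} := by
          ext i
          simp only [ht₀def, Finset.mem_filter, Finset.mem_univ, true_and, hchar i,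
            Finset.mem_singleton]
          constructor
          · rintro ⟨hci, rfl | rfl⟩
            · exact absurd hci hcx
            · rfl
          · rintro rfl
            exact ⟨hcfx, Or.inr rfl⟩
        rw [hset, Finset.card_singleton]
    · rw [hzeroA _ s' hs, zero_add]
      have hx : (s'.1.1).out.1 ∈ s'.1.1 := Sym2.out_fst_mem _
      set x := (s'.1.1).out.1 with hxdef
      have hchar : ∀ i, eB i = s' ↔ (i = x ∨ i = fB x) := by
        intro i
        rw [heBeq i s' hs, hBmem _ hs x hx]
        exact Sym2.mem_iff
      have hmem_sdiff : ∀ i : V, i ∈ Finset.univ \ t₀ ↔ c i = false := by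
        intro i
        simp only [ht₀def, Finset.mem_sdiff, Finset.mem_univ, true_and, Finset.mem_filter]
        cases h : c i <;> simp
      by_cases hcx : c x = false
      · have hset : (Finset.univ \ t₀).filter (fun i => eB i = s') = {x} := by
          ext i
          simp only [Finset.mem_filter, hchar i, Finset.mem_singleton, hmem_sdiff i]
          constructor
          · rintro ⟨hci, rfl | rfl⟩
            · rfl
            · rw [hc2 x, hcx] at hci
              exact absurd hci (by simp)
          · rintro rfl
            exact ⟨hcx, Or.inl rfl⟩
        rw [hset, Finset.card_singleton]
      · have hcx' : c x = true := by
          cases h : c x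
          · exact absurd h hcx
          · rfl
        have hcfx : c (fB x) = false := by rw [hc2 x, hcx']; rfl
        have hset : (Finset.univ \ t₀).filter (fun i => eB i = s') = {fB x} := by
          ext i
          simp only [Finset.mem_filter, hchar i, Finset.mem_singleton, hmem_sdiff i]
          constructor
          · rintro ⟨hci, rfl | rfl⟩
            · exact absurd hci hcx
            · rfl
          · rintro rfl
            exact ⟨hcfx, Or.inr rfl⟩
        rw [hset, Finset.card_singleton]
  obtain ⟨ε, hε, heq⟩ := graphPolyAux_eq_C_mul (someLinearOrder ↥S) ((G.lineGraph).induce S)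
    eA eB hadj hsurj hinj hsep
  refine ⟨allOnes ↥S, ?_, fun v => allOnes_apply v⟩
  rw [MvPolynomial.mem_support_iff, graphPoly, heq, MvPolynomial.coeff_C_mul]
  exact mul_ne_zero hε (coeff_allOnes_ne_zero eA eB MaP.card hcard t₀ ht₀)
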